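/- Let i, m ∈ [0, N−1] and suppose there exists an injective map f from S_i \ S_m into S_m \ S_i such that a < f(a) for every a ∈ S_i \ S_m (equivalently, S_i \ S_m = {a_1, …, a_ℓ}, S_m \ S_i = {b_1, …, b_u} with ℓ ≤ u and a_t < b_t for all t ∈ [1, ℓ]). Then i ⪯ m. -/

import Mathlib

noncomputable section
open scoped Classical
open Finset

/-- The 2×2 binary matrix [[1,0],[1,1]], as an ℕ-indexed function (zero outside range). -/
def G2 (a b : ℕ) : ZMod 2 :=
  if a = 0 ∧ b = 0 then 1
  else if a = 1 ∧ b = 0 then 1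
  else if a = 1 ∧ b = 1 then 1
  else 0

/-- `G n i c` is the (i,c) entry of the n-th Kronecker power over F₂ of [[1,0],[1,1]],
for row/column indices i, c ∈ [0, 2^n − 1] (standard row-major index flattening). -/
def G : ℕ → ℕ → ℕ → ZMod 2
  | 0 => fun i c => if i = 0 ∧ c = 0 then 1 else 0
  | n + 1 => fun i c => G2 (i / 2 ^ n) (c / 2 ^ n) * G n (i % 2 ^ n) (c % 2 ^ n)

/-- Row i of the polar transform G_N (N = 2^n), as a vector of its coordinates. -/
def g (n i : ℕ) : ℕ → ZMod 2 := fun c => G n i c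

/-- S_i ⊆ [0, n−1]: the support of the binary representation of i. -/
def S (n i : ℕ) : Finset ℕ := (Finset.range n).filter fun a => i.testBit a

/-- T_i = [0, n−1] \ S_i. -/
def T (n i : ℕ) : Finset ℕ := Finset.range n \ S n i

/-- Hamming weight of a vector whose coordinates are indexed by [0, 2^n − 1]. -/
def wt (n : ℕ) (v : ℕ → ZMod 2) : ℕ :=
  ((Finset.range (2 ^ n)).filter fun c => v c ≠ 0).card

/-- The index in [0, 2^n − 1] whose binary support is the set U ⊆ [0, n−1]. -/
def idx (U : Finset ℕ) : ℕ := ∑ a ∈ U, 2 ^ a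

/-- K_i = {j ∈ [i+1, N−1] : w(g_j) ≥ w(g_i ⊕ g_j) and w(g_i ⊕ g_j) = w(g_i)}. -/
def K (n i : ℕ) : Finset ℕ :=
  (Finset.Ico (i + 1) (2 ^ n)).filter fun j =>
    wt n (g n i + g n j) ≤ wt n (g n j) ∧ wt n (g n i + g n j) = wt n (g n i)

/-- One generating step of the partial order on [0, 2^n − 1]. -/
def poStep (n i j : ℕ) : Prop :=
  i < 2 ^ n ∧ j < 2 ^ n ∧
    (S n i ⊆ S n j ∨
      ∃ a b, a ∈ S n i ∧ b ∉ S n i ∧ a < b ∧ S n j = insert b (S n i \ {a}))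

/-- The partial order ⪯: reflexive–transitive closure of the generating relation. -/
def po (n : ℕ) : ℕ → ℕ → Prop := Relation.ReflTransGen (poStep n)

/-- Partial Order Property of an information set I ⊆ [0, 2^n − 1]. -/
def POP (n : ℕ) (I : Finset ℕ) : Prop :=
  ∀ i ∈ I, ∀ j, j < 2 ^ n → po n i j → j ∈ I

/-- The code C(I): all F₂-linear combinations (i.e. subset sums) of the rows g_i, i ∈ I. -/
def codewords (n : ℕ) (I : Finset ℕ) : Finset (ℕ → ZMod 2) :=
  I.powerset.image fun H => ∑ h ∈ H, g n h

/-- A_w(I): the number of codewords of C(I) of Hamming weight w. -/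
def A (n : ℕ) (I : Finset ℕ) (w : ℕ) : ℕ :=
  ((codewords n I).filter fun v => wt n v = w).card

/-- The coset C_i(I) = {g_i ⊕ ⊕_{h∈H} g_h : H ⊆ I \ [0,i]}. -/
def coset (n : ℕ) (I : Finset ℕ) (i : ℕ) : Finset (ℕ → ZMod 2) :=
  ((I.filter fun h => i < h).powerset).image fun H => g n i + ∑ h ∈ H, g n h

/-- A_{i,w}(I): the number of vectors of Hamming weight w in the coset C_i(I). -/
def Ai (n : ℕ) (I : Finset ℕ) (i w : ℕ) : ℕ :=
  ((coset n I i).filter fun v => wt n v = w).card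


section ExtPOAux
open Finset

lemma mem_S_iff {n i a : ℕ} : a ∈ S n i ↔ a < n ∧ i.testBit a := by
  simp [S, Finset.mem_filter, Finset.mem_range]

lemma S_subset_range (n i : ℕ) : S n i ⊆ Finset.range n := Finset.filter_subset _ _

lemma sum_two_pow_lt (b : ℕ) : ∑ a ∈ Finset.range b, 2 ^ a < 2 ^ b := by
  induction b with
  | zero => simp
  | succ b ih => rw [Finset.sum_range_succ, pow_succ]; omega

lemma testBit_idx (U : Finset ℕ) (t : ℕ) : (idx U).testBit t = true ↔ t ∈ U := by
  induction U using Finset.induction_on_max with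
  | empty => simp [idx]
  | insert b U hb ih =>
    have hUlt : idx U < 2 ^ b := by
      calc idx U ≤ ∑ a ∈ Finset.range b, 2 ^ a :=
            Finset.sum_le_sum_of_subset (fun x hx => Finset.mem_range.mpr (hb x hx))
        _ < 2 ^ b := sum_two_pow_lt b
    have hbU : b ∉ U := fun h => lt_irrefl b (hb b h)
    have hidx : idx (insert b U) = 2 ^ b + idx U := by
      rw [idx, Finset.sum_insert hbU]; rfl
    rcases lt_trichotomy t b with h | rfl | h
    · rw [hidx, Nat.testBit_two_pow_add_gt h, ih, Finset.mem_insert]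
      constructor
      · exact Or.inr
      · rintro (rfl | hh)
        · omega
        · exact hh
    · rw [hidx, Nat.testBit_two_pow_add_eq,
        Nat.testBit_eq_false_of_lt hUlt]
      simp
    · have : idx (insert b U) < 2 ^ t := by
        rw [hidx]
        calc 2 ^ b + idx U < 2 ^ b + 2 ^ b := by omega
          _ = 2 ^ (b + 1) := by ring
          _ ≤ 2 ^ t := Nat.pow_le_pow_right (by norm_num) h
      rw [Nat.testBit_eq_false_of_lt this]
      simp only [Bool.false_eq_true, false_iff, Finset.mem_insert]
      rintro (rfl | hh)
      · omega
      · exact absurd (hb t hh) (by omega)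

lemma idx_lt {n : ℕ} {U : Finset ℕ} (hU : U ⊆ Finset.range n) : idx U < 2 ^ n := by
  calc idx U ≤ ∑ a ∈ Finset.range n, 2 ^ a :=
        Finset.sum_le_sum_of_subset hU
    _ < 2 ^ n := sum_two_pow_lt n

lemma S_idx {n : ℕ} {U : Finset ℕ} (hU : U ⊆ Finset.range n) : S n (idx U) = U := by
  ext t
  rw [mem_S_iff, testBit_idx]
  constructor
  · exact fun h => h.2
  · exact fun h => ⟨Finset.mem_range.mp (hU h), h⟩

lemma extPO_aux (n m : ℕ) (hm : m < 2 ^ n) :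
    ∀ k i, i < 2 ^ n → ∀ f : ℕ → ℕ,
      (∀ a ∈ S n i \ S n m, f a ∈ S n m \ S n i) →
      Set.InjOn f ((S n i \ S n m : Finset ℕ) : Set ℕ) →
      (∀ a ∈ S n i \ S n m, a < f a) →
      (S n i \ S n m).card = k → po n i m := by
  intro k
  induction k with
  | zero =>
    intro i hi f _ _ _ hcard
    have hsub : S n i ⊆ S n m := by
      rw [← Finset.sdiff_eq_empty_iff_subset]
      exact Finset.card_eq_zero.mp hcard
    exact Relation.ReflTransGen.single ⟨hi, hm, Or.inl hsub⟩
  | succ k ih =>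
    intro i hi f hmaps hinj hlt hcard
    obtain ⟨a, ha⟩ : (S n i \ S n m).Nonempty :=
      Finset.card_pos.mp (by omega)
    obtain ⟨haSi, haSm⟩ := Finset.mem_sdiff.mp ha
    have hb := hmaps a ha
    obtain ⟨hbSm, hbSi⟩ := Finset.mem_sdiff.mp hb
    set b := f a with hbdef
    set U : Finset ℕ := insert b (S n i \ {a}) with hU
    have hUsub : U ⊆ Finset.range n := by
      intro x hx
      rcases Finset.mem_insert.mp hx with rfl | hx
      · exact S_subset_range n m hbSm
      · exact S_subset_range n i (Finset.mem_sdiff.mp hx).1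
    set j : ℕ := idx U with hj
    have hjlt : j < 2 ^ n := idx_lt hUsub
    have hSj : S n j = U := S_idx hUsub
    have hstep : poStep n i j :=
      ⟨hi, hjlt, Or.inr ⟨a, b, haSi, hbSi, hlt a ha, hSj⟩⟩
    -- the new difference set
    have hdiff : S n j \ S n m = (S n i \ S n m).erase a := by
      ext x
      simp only [hSj, hU, Finset.mem_sdiff, Finset.mem_insert, Finset.mem_erase,
        Finset.mem_singleton]
      constructor
      · rintro ⟨rfl | ⟨hx1, hx2⟩, hx3⟩
        · exact absurd hbSm hx3
        · exact ⟨hx2, hx1, hx3⟩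
      · rintro ⟨hx1, hx2, hx3⟩
        exact ⟨Or.inr ⟨hx2, hx1⟩, hx3⟩
    have hsubdiff : S n j \ S n m ⊆ S n i \ S n m := by
      rw [hdiff]; exact Finset.erase_subset _ _
    have hmaps' : ∀ x ∈ S n j \ S n m, f x ∈ S n m \ S n j := by
      intro x hx
      have hxold := hsubdiff hx
      have hxa : x ≠ a := by
        rw [hdiff] at hx; exact (Finset.mem_erase.mp hx).1
      obtain ⟨hfx1, hfx2⟩ := Finset.mem_sdiff.mp (hmaps x hxold)
      refine Finset.mem_sdiff.mpr ⟨hfx1, ?_⟩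
      rw [hSj, hU]
      intro hmem
      rcases Finset.mem_insert.mp hmem with heq | hmem
      · exact hxa (hinj (by exact_mod_cast hxold) (by exact_mod_cast ha) heq)
      · exact hfx2 (Finset.mem_sdiff.mp (Finset.mem_sdiff.mpr
          ⟨(Finset.mem_sdiff.mp hmem).1, hfx2⟩)).1 |>.elim
    have hinj' : Set.InjOn f ((S n j \ S n m : Finset ℕ) : Set ℕ) :=
      hinj.mono (by exact_mod_cast hsubdiff)
    have hlt' : ∀ x ∈ S n j \ S n m, x < f x := fun x hx => hlt x (hsubdiff hx)
    have hcard' : (S n j \ S n m).card = k := by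
      rw [hdiff, Finset.card_erase_of_mem ha, hcard]
      rfl
    exact Relation.ReflTransGen.head hstep (ih j hjlt f hmaps' hinj' hlt' hcard')

end ExtPOAux

/-- if there is an injection f : S_i \ S_m → S_m \ S_i with a < f(a) for
all a ∈ S_i \ S_m, then i ⪯ m. -/
theorem extPO (n : ℕ) (hn : 1 ≤ n) (i m : ℕ) (hi : i < 2 ^ n) (hm : m < 2 ^ n)
    (f : ℕ → ℕ)
    (hmaps : ∀ a ∈ S n i \ S n m, f a ∈ S n m \ S n i)
    (hinj : Set.InjOn f ((S n i \ S n m : Finset ℕ) : Set ℕ))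
    (hlt : ∀ a ∈ S n i \ S n m, a < f a) :
    po n i m :=
  extPO_aux n m hm (S n i \ S n m).card i hi f hmaps hinj hlt rfl
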